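/- Let δ∈𝒦∞ and let ℓ:ℝ≥0→ℝ≥0 be a continuous integrable function. Then there exists a 𝒦ℒ function σ such that every continuously differentiable y:[t₀,∞)→ℝ≥0 satisfying ẏ(t) ≤ −δ(y(t)) + ℓ(t) for all t≥t₀ obeys y(t) ≤ σ(y(t₀), t−t₀) + 2∫₀^∞ℓ(s)ds for all t≥t₀. Moreover, if lim_{t→∞}ℓ(t)=0, then there exists a 𝒦ℒ function β, depending only on δ and ℓ, such that y(t) ≤ β(y(t₀) + ∫₀^∞ℓ(s)ds, t−t₀) for all t≥t₀. -/

import Mathlib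

open Filter Topology Set MeasureTheory
open scoped RealInnerProductSpace

noncomputable section

/-- Class `𝒦`: continuous, strictly increasing on `[0,∞)`, vanishing at `0`. -/
structure ClassK (g : ℝ → ℝ) : Prop where
  cont : ContinuousOn g (Set.Ici 0)
  mono : StrictMonoOn g (Set.Ici 0)
  zero : g 0 = 0
  nonneg : ∀ r : ℝ, 0 ≤ r → 0 ≤ g r

/-- Class `𝒦∞`: unbounded class-`𝒦` functions. -/
structure ClassKInf (g : ℝ → ℝ) : Prop where
  toClassK : ClassK g
  unbounded : ∀ M : ℝ, ∃ r : ℝ, 0 ≤ r ∧ M < g r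

/-- Class `𝒫`: positive definite functions. -/
structure ClassPD (g : ℝ → ℝ) : Prop where
  cont : ContinuousOn g (Set.Ici 0)
  zero : g 0 = 0
  pos : ∀ r : ℝ, 0 < r → 0 < g r

/-- Class `𝒦ℒ`. -/
structure ClassKL (b : ℝ → ℝ → ℝ) : Prop where
  classK : ∀ t : ℝ, 0 ≤ t → ClassK (fun r => b r t)
  contL : ∀ r : ℝ, 0 < r → ContinuousOn (fun t => b r t) (Set.Ici 0)
  antiL : ∀ r : ℝ, 0 < r → StrictAntiOn (fun t => b r t) (Set.Ici 0)
  tendstoL : ∀ r : ℝ, 0 < r → Tendsto (fun t => b r t) atTop (nhds 0)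


/-- Extension of a class-K∞ function to a strictly monotone surjection of ℝ. -/
def gext (δ : ℝ → ℝ) (r : ℝ) : ℝ := δ (max r 0) + min r 0

lemma gext_of_nonneg {δ : ℝ → ℝ} (h0 : δ 0 = 0) {r : ℝ} (hr : 0 ≤ r) : gext δ r = δ r := by
  simp [gext, max_eq_left hr, min_eq_right hr]

lemma exists_kinv {δ : ℝ → ℝ} (hδ : ClassKInf δ) :
    ∃ φ : ℝ → ℝ, Continuous φ ∧ StrictMono φ ∧ φ 0 = 0 ∧ Function.Surjective φ ∧
      (∀ s : ℝ, 0 ≤ s → 0 ≤ φ s ∧ δ (φ s) = s) := by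
  obtain ⟨hK, hunb⟩ := hδ
  have hg0 : gext δ 0 = 0 := by simp [gext, hK.zero]
  have hgmono : StrictMono (gext δ) := by
    intro a b hab
    rcases le_or_gt 0 a with ha | ha
    · have hb : 0 ≤ b := ha.trans hab.le
      rw [gext_of_nonneg hK.zero ha, gext_of_nonneg hK.zero hb]
      exact hK.mono ha hb hab
    · have h1 : min a 0 < min b 0 := by
        rcases le_or_gt b 0 with hb | hb
        · simpa [min_eq_left ha.le, min_eq_left hb] using hab
        · simpa [min_eq_left ha.le, min_eq_right hb.le] using ha
      have h2 : δ (max a 0) ≤ δ (max b 0) :=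
        hK.mono.monotoneOn (le_max_right a 0) (le_max_right b 0)
          (max_le_max hab.le le_rfl)
      exact add_lt_add_of_le_of_lt h2 h1
  have hgcont : Continuous (gext δ) := by
    have h1 : Continuous fun r : ℝ => δ (max r 0) :=
      hK.cont.comp_continuous (continuous_id.max continuous_const)
        fun r => le_max_right r 0
    exact h1.add (continuous_id.min continuous_const)
  have hgsurj : Function.Surjective (gext δ) := by
    apply hgcont.surjective
    · apply tendsto_atTop_atTop_of_monotone hgmono.monotone
      intro b
      obtain ⟨r, hr, hb⟩ := hunb b
      exact ⟨r, by rw [gext_of_nonneg hK.zero hr]; exact hb.le⟩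
    · apply tendsto_atBot_atBot_of_monotone hgmono.monotone
      intro b
      refine ⟨min b 0, ?_⟩
      have : gext δ (min b 0) = min b 0 := by
        simp [gext, max_eq_right (min_le_right b 0), min_eq_left (min_le_right b 0), hK.zero,
          min_assoc]
      rw [this]; exact min_le_left b 0
  set e := (hgmono.orderIsoOfSurjective _ hgsurj)
  refine ⟨fun s => e.symm s, ?_, fun a b hab => e.symm.strictMono hab, ?_, e.symm.surjective, ?_⟩
  · exact e.toHomeomorph.symm.continuous
  · have h := e.symm_apply_apply 0
    rw [show e 0 = 0 from hg0] at h
    exact h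
  · intro s hs
    have h0 : e.symm (0:ℝ) = 0 := by
      have h := e.symm_apply_apply 0
      rw [show e 0 = 0 from hg0] at h
      exact h
    have hpos : 0 ≤ e.symm s := by
      rw [← h0]; exact e.symm.monotone hs
    refine ⟨hpos, ?_⟩
    have : gext δ (e.symm s) = s := e.apply_symm_apply s
    rwa [gext_of_nonneg hK.zero hpos] at this
def Ltot (l : ℝ → ℝ) : ℝ := ∫ u in Ici (0:ℝ), l u
def Lam (l : ℝ → ℝ) (s : ℝ) : ℝ := Ltot l - ∫ u in (0:ℝ)..s, l u

lemma Lam_zero (l : ℝ → ℝ) : Lam l 0 = Ltot l := by simp [Lam]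

lemma Ltot_nonneg {l : ℝ → ℝ} (hln : ∀ t, 0 ≤ l t) : 0 ≤ Ltot l :=
  setIntegral_nonneg measurableSet_Ici fun x _ => hln x

lemma Lam_anti {l : ℝ → ℝ} (hlc : Continuous l) (hln : ∀ t, 0 ≤ l t) : Antitone (Lam l) := by
  intro a b hab
  have h := intervalIntegral.integral_add_adjacent_intervals (μ := volume)
    (hlc.intervalIntegrable 0 a) (hlc.intervalIntegrable a b)
  have h2 : 0 ≤ ∫ u in a..b, l u := intervalIntegral.integral_nonneg hab fun u _ => hln u
  simp only [Lam]
  linarith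

lemma Lam_eq_Ici {l : ℝ → ℝ} (hli : IntegrableOn l (Ici 0)) {s : ℝ} (hs : 0 ≤ s) :
    Lam l s = ∫ u in Ici s, l u := by
  have hd : Disjoint (Ico 0 s) (Ici s) := by
    rw [Set.disjoint_left]; intro x hx hx'; exact absurd hx' (not_le.mpr hx.2)
  have hu : Ico 0 s ∪ Ici s = Ici (0:ℝ) := Ico_union_Ici_eq_Ici hs
  have hsplit := setIntegral_union hd measurableSet_Ici (hli.mono_set Ico_subset_Ici_self)
    (hli.mono_set (Ici_subset_Ici.mpr hs))
  rw [hu] at hsplit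
  have hIco : ∫ u in Ico 0 s, l u = ∫ u in (0:ℝ)..s, l u := by
    rw [intervalIntegral.integral_of_le hs, integral_Ico_eq_integral_Ioo,
      integral_Ioc_eq_integral_Ioo]
  simp only [Lam, Ltot]
  rw [hsplit, hIco]; ring

lemma Lam_nonneg {l : ℝ → ℝ} (hlc : Continuous l) (hln : ∀ t, 0 ≤ l t)
    (hli : IntegrableOn l (Ici 0)) (s : ℝ) : 0 ≤ Lam l s := by
  rcases le_or_gt 0 s with hs | hs
  · rw [Lam_eq_Ici hli hs]
    exact setIntegral_nonneg measurableSet_Ici fun x _ => hln x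
  · have := Lam_anti hlc hln hs.le
    rw [Lam_zero] at this
    exact le_trans (Ltot_nonneg hln) this

lemma Lam_le {l : ℝ → ℝ} (hlc : Continuous l) (hln : ∀ t, 0 ≤ l t) {s : ℝ} (hs : 0 ≤ s) :
    Lam l s ≤ Ltot l := by
  have := Lam_anti hlc hln hs
  rwa [Lam_zero] at this

lemma Lam_cont {l : ℝ → ℝ} (hlc : Continuous l) : Continuous (Lam l) :=
  continuous_const.sub
    (intervalIntegral.continuous_primitive (fun a b => hlc.intervalIntegrable a b) 0)

lemma Lam_tendsto {l : ℝ → ℝ} (hli : IntegrableOn l (Ici 0)) :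
    Tendsto (Lam l) atTop (nhds 0) := by
  have h := MeasureTheory.intervalIntegral_tendsto_integral_Ioi (b := fun x : ℝ => x) 0
    (hli.mono_set Ioi_subset_Ici_self) tendsto_id
  have h2 : Tendsto (Lam l) atTop (nhds (Ltot l - ∫ u in Ioi (0:ℝ), l u)) :=
    tendsto_const_nhds.sub h
  have h3 : Ltot l - ∫ u in Ioi (0:ℝ), l u = 0 := by
    rw [Ltot, integral_Ici_eq_integral_Ioi]; ring
  rwa [h3] at h2
section Gronwall

variable {δ : ℝ → ℝ} {l : ℝ → ℝ} {t0 : ℝ} {y y' : ℝ → ℝ}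

/-- Basic integral comparison: if `c ≤ δ(y u)` on `[s,t]`, then
`y t ≤ y s - c (t - s) + Λ(s)`. -/
lemma lemB (hδ : ClassKInf δ) (hlc : Continuous l) (hln : ∀ t, 0 ≤ l t)
    (hli : IntegrableOn l (Ici 0)) (ht0 : 0 ≤ t0)
    (hyd : ∀ t, t0 ≤ t → HasDerivAt y (y' t) t)
    (hy'c : ContinuousOn y' (Ici t0))
    (hineq : ∀ t, t0 ≤ t → y' t ≤ - δ (y t) + l t)
    {c s t : ℝ} (hts : t0 ≤ s) (hst : s ≤ t)
    (hc : ∀ u, s ≤ u → u ≤ t → c ≤ δ (y u)) :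
    y t ≤ y s - c * (t - s) + Lam l s := by
  have hIcc : Icc s t ⊆ Ici t0 := fun u hu => le_trans hts hu.1
  have huIcc : uIcc s t = Icc s t := uIcc_of_le hst
  have hder : ∀ u ∈ uIcc s t, HasDerivAt y (y' u) u := by
    rw [huIcc]; exact fun u hu => hyd u (hIcc hu)
  have hy'int : IntervalIntegrable y' volume s t := by
    apply ContinuousOn.intervalIntegrable
    rw [huIcc]; exact hy'c.mono hIcc
  have hftc : ∫ u in s..t, y' u = y t - y s :=
    intervalIntegral.integral_eq_sub_of_hasDerivAt hder hy'int
  have hmono : ∫ u in s..t, y' u ≤ ∫ u in s..t, (l u - c) := by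
    apply intervalIntegral.integral_mono_on hst hy'int
      ((hlc.sub continuous_const).intervalIntegrable s t)
    intro u hu
    have h1 := hineq u (hIcc hu)
    have h2 := hc u hu.1 hu.2
    show y' u ≤ l u - c
    linarith
  have hsub : ∫ u in s..t, (l u - c) = (∫ u in s..t, l u) - c * (t - s) := by
    rw [intervalIntegral.integral_sub (hlc.intervalIntegrable s t)
      (intervalIntegrable_const), intervalIntegral.integral_const]
    simp [smul_eq_mul]; ring
  have htail : ∫ u in s..t, l u ≤ Lam l s := by
    rw [intervalIntegral.integral_of_le hst, Lam_eq_Ici hli (le_trans ht0 hts)]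
    apply setIntegral_mono_set (hli.mono_set (Ici_subset_Ici.mpr (le_trans ht0 hts)))
      (Filter.Eventually.of_forall fun x => hln x)
    exact (HasSubset.Subset.eventuallyLE (fun x hx => le_of_lt hx.1))
  linarith

/-- With `c = 0`: `y t ≤ y s + Λ(s)`. -/
lemma lemA (hδ : ClassKInf δ) (hlc : Continuous l) (hln : ∀ t, 0 ≤ l t)
    (hli : IntegrableOn l (Ici 0)) (ht0 : 0 ≤ t0)
    (hy0 : ∀ t, t0 ≤ t → 0 ≤ y t)
    (hyd : ∀ t, t0 ≤ t → HasDerivAt y (y' t) t)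
    (hy'c : ContinuousOn y' (Ici t0))
    (hineq : ∀ t, t0 ≤ t → y' t ≤ - δ (y t) + l t)
    {s t : ℝ} (hts : t0 ≤ s) (hst : s ≤ t) :
    y t ≤ y s + Lam l s := by
  have h := lemB hδ hlc hln hli ht0 hyd hy'c hineq hts hst (c := 0)
    (fun u hu1 _ => hδ.toClassK.nonneg (y u) (hy0 u (le_trans hts hu1)))
  linarith

/-- Reach-and-stay: after waiting `(R + L')/δ(ε)` past `s`, `y` stays below `ε + L'`. -/
lemma lemC (hδ : ClassKInf δ) (hlc : Continuous l) (hln : ∀ t, 0 ≤ l t)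
    (hli : IntegrableOn l (Ici 0)) (ht0 : 0 ≤ t0)
    (hy0 : ∀ t, t0 ≤ t → 0 ≤ y t)
    (hyd : ∀ t, t0 ≤ t → HasDerivAt y (y' t) t)
    (hy'c : ContinuousOn y' (Ici t0))
    (hineq : ∀ t, t0 ≤ t → y' t ≤ - δ (y t) + l t)
    {s ε R L' : ℝ} (hs : t0 ≤ s) (hε : 0 < ε) (hR : y s ≤ R) (hL' : Lam l s ≤ L') :
    ∀ t, s + (R + L') / δ ε ≤ t → y t ≤ ε + L' := by
  have hδε : 0 < δ ε := by
    have := hδ.toClassK.mono (le_refl (0:ℝ)) (mem_Ici.mpr hε.le) hε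
    rwa [hδ.toClassK.zero] at this
  have hR0 : 0 ≤ R := le_trans (hy0 s hs) hR
  have hL'0 : 0 ≤ L' := le_trans (Lam_nonneg hlc hln hli s) hL'
  set T := (R + L') / δ ε with hTdef
  have hT0 : 0 ≤ T := div_nonneg (by linarith) hδε.le
  intro t ht
  by_cases hcase : ∃ t1, s ≤ t1 ∧ t1 ≤ s + T ∧ y t1 ≤ ε
  · obtain ⟨t1, h1, h2, h3⟩ := hcase
    have hB := lemA hδ hlc hln hli ht0 hy0 hyd hy'c hineq (le_trans hs h1)
      (show t1 ≤ t by linarith)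
    have hLam : Lam l t1 ≤ L' := le_trans (Lam_anti hlc hln h1) hL'
    linarith
  · push_neg at hcase
    have key : ∀ u, s ≤ u → u ≤ s + T → δ ε ≤ δ (y u) := by
      intro u h1 h2
      exact hδ.toClassK.mono.monotoneOn (mem_Ici.mpr hε.le)
        (mem_Ici.mpr (hy0 u (le_trans hs h1))) (hcase u h1 h2).le
    have hB := lemB hδ hlc hln hli ht0 hyd hy'c hineq hs
      (le_add_of_nonneg_right hT0) key
    have hTδ : δ ε * T = R + L' := by
      rw [hTdef]; field_simp
    have hpos := hcase (s + T) (le_add_of_nonneg_right hT0) le_rfl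
    have hsimp : s + T - s = T := by ring
    rw [hsimp] at hB
    linarith

/-- Key decay estimate. -/
lemma lemKey (hδ : ClassKInf δ) (hlc : Continuous l) (hln : ∀ t, 0 ≤ l t)
    (hli : IntegrableOn l (Ici 0)) (ht0 : 0 ≤ t0)
    (hy0 : ∀ t, t0 ≤ t → 0 ≤ y t)
    (hyd : ∀ t, t0 ≤ t → HasDerivAt y (y' t) t)
    (hy'c : ContinuousOn y' (Ici t0))
    (hineq : ∀ t, t0 ≤ t → y' t ≤ - δ (y t) + l t)
    (φ : ℝ → ℝ) (hφm : StrictMono φ) (hφ0 : φ 0 = 0)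
    (hφδ : ∀ s, 0 ≤ s → 0 ≤ φ s ∧ δ (φ s) = s)
    {r t : ℝ} (hr : y t0 ≤ r) (ht : t0 < t) :
    y t ≤ min (r + Ltot l)
      (φ (4 * (r + Ltot l) / (t - t0)) + Lam l ((t - t0) / 2)) := by
  set L := Ltot l with hLdef
  have hL0 : 0 ≤ L := Ltot_nonneg hln
  have hr0 : 0 ≤ r := le_trans (hy0 t0 le_rfl) hr
  set τ := t - t0 with hτdef
  have hτ : 0 < τ := by simp [hτdef]; linarith
  have hLam0 : Lam l t0 ≤ L := by rw [hLdef]; exact Lam_le hlc hln ht0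
  have h1 : y t ≤ r + L := by
    have := lemA hδ hlc hln hli ht0 hy0 hyd hy'c hineq le_rfl ht.le
    linarith
  refine le_min h1 ?_
  rcases eq_or_lt_of_le (show (0:ℝ) ≤ r + L by linarith) with h0 | hpos
  · have hzero : φ (4 * (r + L) / τ) = 0 := by
      rw [← h0]; norm_num [hφ0]
    rw [hzero]
    have := Lam_nonneg hlc hln hli (τ / 2)
    linarith
  · set ε := φ (4 * (r + L) / τ) with hεdef
    have hargpos : 0 < 4 * (r + L) / τ := by positivity
    have hε : 0 < ε := by
      have := hφm hargpos
      rwa [hφ0] at this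
    have hδε : δ ε = 4 * (r + L) / τ := (hφδ _ hargpos.le).2
    set s := t0 + τ / 2 with hsdef
    have hss : t0 ≤ s := by rw [hsdef]; linarith
    have hys : y s ≤ r + L := by
      have := lemA hδ hlc hln hli ht0 hy0 hyd hy'c hineq le_rfl hss
      linarith
    have hLs : Lam l s ≤ Lam l (τ / 2) := Lam_anti hlc hln (by rw [hsdef]; linarith)
    have hL'leL : Lam l (τ / 2) ≤ L := by rw [hLdef]; exact Lam_le hlc hln (by linarith)
    have hTle : ((r + L) + Lam l (τ / 2)) / δ ε ≤ τ / 2 := by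
      rw [hδε, div_le_iff₀ hargpos]
      have heq : τ / 2 * (4 * (r + L) / τ) = 2 * (r + L) := by
        field_simp; ring
      rw [heq]; linarith
    have := lemC hδ hlc hln hli ht0 hy0 hyd hy'c hineq hss hε hys (le_refl (Lam l (τ/2)) |> le_trans hLs) t
      (by linarith)
    exact this

end Gronwall
/-- The `𝒦ℒ` bound function. -/
def Fdef (φ l : ℝ → ℝ) (r τ : ℝ) : ℝ :=
  (if τ = 0 then r else min r (φ (4 * (r + Ltot l) / τ) + Lam l (τ / 2))) + r / (1 + τ)

lemma Fdef_classKL {φ l : ℝ → ℝ} (hφc : Continuous φ) (hφm : StrictMono φ)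
    (hφ0 : φ 0 = 0) (hφs : Function.Surjective φ)
    (hlc : Continuous l) (hln : ∀ t, 0 ≤ l t) (hli : IntegrableOn l (Ici 0)) :
    ClassKL (Fdef φ l) := by
  have hL0 : 0 ≤ Ltot l := Ltot_nonneg hln
  have hφnn : ∀ s, 0 ≤ s → 0 ≤ φ s := by
    intro s hs
    have := hφm.monotone hs
    rwa [hφ0] at this
  constructor
  · -- classK slices
    intro t ht
    rcases eq_or_lt_of_le ht with h | h
    · -- t = 0
      have h2 : ∀ r, Fdef φ l r t = r + r := by
        intro r; simp [Fdef, ← h]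
      constructor
      · exact ((continuous_id.add continuous_id).continuousOn).congr fun r _ => h2 r
      · intro a _ b _ hab
        simp only [h2]; linarith
      · simp [h2]
      · intro r hr; rw [h2]; linarith
    · -- t > 0
      have h2 : ∀ r, Fdef φ l r t =
          min r (φ (4 * (r + Ltot l) / t) + Lam l (t / 2)) + r / (1 + t) := by
        intro r; simp [Fdef, h.ne']
      have hcont : Continuous fun r : ℝ =>
          min r (φ (4 * (r + Ltot l) / t) + Lam l (t / 2)) + r / (1 + t) := by
        apply Continuous.add
        · exact continuous_id.min
            (((hφc.comp ((continuous_const.mul (continuous_id.add continuous_const)).div_const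
              t))).add continuous_const)
        · exact continuous_id.div_const (1 + t)
      have hmono : StrictMono fun r : ℝ =>
          min r (φ (4 * (r + Ltot l) / t) + Lam l (t / 2)) + r / (1 + t) := by
        intro a b hab
        have h1t : 0 < 1 + t := by linarith
        have hdiv : a / (1 + t) < b / (1 + t) := by
          apply div_lt_div_of_pos_right hab h1t
        have hmin : min a (φ (4 * (a + Ltot l) / t) + Lam l (t / 2)) ≤
            min b (φ (4 * (b + Ltot l) / t) + Lam l (t / 2)) := by
          apply min_le_min hab.le
          refine add_le_add ?_ le_rfl
          apply hφm.monotone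
          gcongr
        dsimp only
        linarith
      constructor
      · exact hcont.continuousOn.congr fun r _ => h2 r
      · intro a _ b _ hab
        simp only [h2]; exact hmono hab
      · rw [h2 0]
        have : min 0 (φ (4 * (0 + Ltot l) / t) + Lam l (t / 2)) = 0 :=
          min_eq_left (add_nonneg (hφnn _ (by positivity)) (Lam_nonneg hlc hln hli _))
        rw [this]; simp
      · intro r hr
        rw [h2 r]
        have : 0 ≤ min r (φ (4 * (r + Ltot l) / t) + Lam l (t / 2)) :=
          le_min hr (add_nonneg (hφnn _ (by positivity)) (Lam_nonneg hlc hln hli _))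
        have : 0 ≤ r / (1 + t) := by positivity
        positivity
  · -- contL
    intro r hr
    intro τ0 hτ0
    rcases eq_or_lt_of_le (mem_Ici.mp hτ0) with h | h
    · -- τ0 = 0
      obtain ⟨s0, hs0⟩ := hφs r
      set M := max s0 1 with hMdef
      have hM : 0 < M := lt_of_lt_of_le one_pos (le_max_right _ _)
      set tst := 4 * (r + Ltot l) / M with htstdef
      have htst : 0 < tst := by positivity
      have hev : ∀ᶠ τ in nhdsWithin τ0 (Ici 0),
          Fdef φ l r τ = r + r / (1 + τ) := by
        rw [← h]
        filter_upwards [nhdsWithin_le_nhds (Iio_mem_nhds htst), self_mem_nhdsWithin]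
          with τ h1 h2
        by_cases hτ : τ = 0
        · simp [Fdef, hτ]
        · have hτpos : 0 < τ := lt_of_le_of_ne (mem_Ici.mp h2) (Ne.symm hτ)
          have hMτ : M * tst = 4 * (r + Ltot l) := by
            rw [htstdef, mul_div_cancel₀ _ hM.ne']
          have harg : M ≤ 4 * (r + Ltot l) / τ := by
            rw [le_div_iff₀ hτpos]
            nlinarith [mul_lt_mul_of_pos_left (mem_Iio.mp h1) hM]
          have hrφ : r ≤ φ (4 * (r + Ltot l) / τ) := by
            have := hφm.monotone (le_trans (le_max_left s0 1) harg)
            rwa [hs0] at this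
          have hmin : min r (φ (4 * (r + Ltot l) / τ) + Lam l (τ / 2)) = r :=
            min_eq_left (le_trans hrφ (le_add_of_nonneg_right (Lam_nonneg hlc hln hli _)))
          simp [Fdef, hτ, hmin]
      have hcw : ContinuousWithinAt (fun τ : ℝ => r + r / (1 + τ)) (Ici 0) τ0 := by
        apply ContinuousAt.continuousWithinAt
        apply ContinuousAt.add continuousAt_const
        apply ContinuousAt.div continuousAt_const
          (continuousAt_const.add continuousAt_id)
        rw [← h]; norm_num
      apply hcw.congr_of_eventuallyEq hev
      rw [← h]; simp [Fdef]
    · -- τ0 > 0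
      apply ContinuousAt.continuousWithinAt
      have c1 : ContinuousAt (fun τ : ℝ => 4 * (r + Ltot l) / τ) τ0 :=
        ContinuousAt.div continuousAt_const continuousAt_id h.ne'
      have c2 : ContinuousAt (fun τ : ℝ => φ (4 * (r + Ltot l) / τ)) τ0 :=
        (hφc.continuousAt).comp c1
      have c3 : ContinuousAt (fun τ : ℝ => Lam l (τ / 2)) τ0 :=
        ((Lam_cont hlc).comp (continuous_id.div_const 2)).continuousAt
      have c4 : ContinuousAt (fun τ : ℝ => r / (1 + τ)) τ0 :=
        ContinuousAt.div continuousAt_const (continuousAt_const.add continuousAt_id)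
          (by linarith)
      have hca : ContinuousAt (fun τ : ℝ =>
          min r (φ (4 * (r + Ltot l) / τ) + Lam l (τ / 2)) + r / (1 + τ)) τ0 :=
        (continuousAt_const.min (c2.add c3)).add c4
      apply hca.congr
      filter_upwards [eventually_ne_nhds h.ne'] with τ hτ
      simp [Fdef, hτ]
  · -- antiL
    intro r hr
    intro τ1 h1 τ2 h2 h12
    have h1' : (0:ℝ) ≤ τ1 := mem_Ici.mp h1
    have hG : (if τ2 = 0 then r else
        min r (φ (4 * (r + Ltot l) / τ2) + Lam l (τ2 / 2))) ≤
        (if τ1 = 0 then r else min r (φ (4 * (r + Ltot l) / τ1) + Lam l (τ1 / 2))) := by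
      rcases eq_or_lt_of_le h1' with he | hpos
      · rw [if_pos he.symm, if_neg (by linarith : τ2 ≠ 0)]
        exact min_le_left _ _
      · rw [if_neg hpos.ne', if_neg (by linarith : τ2 ≠ 0)]
        apply min_le_min le_rfl
        apply add_le_add
        · apply hφm.monotone
          apply div_le_div_of_nonneg_left (by positivity) hpos h12.le
        · exact Lam_anti hlc hln (by linarith)
    have hdiv : r / (1 + τ2) < r / (1 + τ1) :=
      div_lt_div_of_pos_left hr (by linarith) (by linarith)
    simp only [Fdef]
    linarith
  · -- tendstoL
    intro r hr
    have t1 : Tendsto (fun τ : ℝ => 4 * (r + Ltot l) / τ) atTop (nhds 0) :=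
      Tendsto.div_atTop tendsto_const_nhds tendsto_id
    have t2 : Tendsto (fun τ : ℝ => φ (4 * (r + Ltot l) / τ)) atTop (nhds 0) := by
      have := (hφc.tendsto 0).comp t1
      rwa [hφ0] at this
    have t3 : Tendsto (fun τ : ℝ => Lam l (τ / 2)) atTop (nhds 0) :=
      (Lam_tendsto hli).comp (tendsto_id.atTop_div_const two_pos)
    have hG0 : Tendsto (fun τ : ℝ =>
        φ (4 * (r + Ltot l) / τ) + Lam l (τ / 2)) atTop (nhds 0) := by
      simpa using t2.add t3
    have hsq : Tendsto (fun τ : ℝ => if τ = 0 then r else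
        min r (φ (4 * (r + Ltot l) / τ) + Lam l (τ / 2))) atTop (nhds 0) := by
      apply squeeze_zero' ?_ ?_ hG0
      · filter_upwards [eventually_gt_atTop (0:ℝ)] with τ hτ
        rw [if_neg hτ.ne']
        exact le_min hr.le (add_nonneg (hφnn _ (by positivity)) (Lam_nonneg hlc hln hli _))
      · filter_upwards [eventually_gt_atTop (0:ℝ)] with τ hτ
        rw [if_neg hτ.ne']
        exact min_le_right _ _
    have hsq2 : Tendsto (fun τ : ℝ => r / (1 + τ)) atTop (nhds 0) :=
      Tendsto.div_atTop tendsto_const_nhds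
        (tendsto_atTop_add_const_left atTop 1 tendsto_id)
    simpa [Fdef] using hsq.add hsq2
/-- Gronwall-type comparison lemma with an integrable disturbance `l`, and its refined
form when `l(t) → 0`. -/
theorem stmt19 (δ : ℝ → ℝ) (hδ : ClassKInf δ) (l : ℝ → ℝ)
    (hlc : Continuous l) (hln : ∀ t : ℝ, 0 ≤ l t)
    (hli : MeasureTheory.IntegrableOn l (Set.Ici 0)) :
    (∃ σ : ℝ → ℝ → ℝ, ClassKL σ ∧
      ∀ t0 : ℝ, 0 ≤ t0 → ∀ y y' : ℝ → ℝ,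
        (∀ t : ℝ, t0 ≤ t → 0 ≤ y t) →
        (∀ t : ℝ, t0 ≤ t → HasDerivAt y (y' t) t) →
        ContinuousOn y' (Set.Ici t0) →
        (∀ t : ℝ, t0 ≤ t → y' t ≤ - δ (y t) + l t) →
        ∀ t : ℝ, t0 ≤ t →
          y t ≤ σ (y t0) (t - t0) + 2 * ∫ s in Set.Ici (0:ℝ), l s) ∧
    (Tendsto l atTop (nhds 0) →
      ∃ β : ℝ → ℝ → ℝ, ClassKL β ∧
        ∀ t0 : ℝ, 0 ≤ t0 → ∀ y y' : ℝ → ℝ,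
          (∀ t : ℝ, t0 ≤ t → 0 ≤ y t) →
          (∀ t : ℝ, t0 ≤ t → HasDerivAt y (y' t) t) →
          ContinuousOn y' (Set.Ici t0) →
          (∀ t : ℝ, t0 ≤ t → y' t ≤ - δ (y t) + l t) →
          ∀ t : ℝ, t0 ≤ t →
            y t ≤ β (y t0 + ∫ s in Set.Ici (0:ℝ), l s) (t - t0)) := by
  obtain ⟨φ, hφc, hφm, hφ0, hφs, hφδ⟩ := exists_kinv hδ
  have hKL : ClassKL (Fdef φ l) := Fdef_classKL hφc hφm hφ0 hφs hlc hln hli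
  have hL0 : 0 ≤ Ltot l := Ltot_nonneg hln
  have hLint : (∫ s in Set.Ici (0:ℝ), l s) = Ltot l := rfl
  constructor
  · -- first part
    refine ⟨Fdef φ l, hKL, ?_⟩
    intro t0 ht0 y y' hy0 hyd hy'c hineq t ht
    rw [hLint]
    rcases eq_or_lt_of_le ht with h | h
    · rw [← h]
      simp only [Fdef, sub_self, if_pos rfl, if_true, add_zero, div_one]
      have := hy0 t0 le_rfl
      linarith
    · have hkey := lemKey hδ hlc hln hli ht0 hy0 hyd hy'c hineq φ hφm hφ0 hφδ
        (le_refl (y t0)) h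
      set A := φ (4 * (y t0 + Ltot l) / (t - t0)) + Lam l ((t - t0) / 2) with hA
      have h2 : min (y t0 + Ltot l) A ≤ min (y t0) A + Ltot l := by
        rcases le_total (y t0) A with hc | hc
        · rw [min_eq_left hc]; exact min_le_left _ _
        · rw [min_eq_right hc]
          exact le_trans (min_le_right _ _) (le_add_of_nonneg_right hL0)
      have hdivnn : 0 ≤ y t0 / (1 + (t - t0)) := by
        apply div_nonneg (hy0 t0 le_rfl); linarith
      simp only [Fdef, if_neg (sub_pos.mpr h).ne']
      rw [← hA]
      linarith
  · -- second part
    intro _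
    refine ⟨Fdef φ l, hKL, ?_⟩
    intro t0 ht0 y y' hy0 hyd hy'c hineq t ht
    rw [hLint]
    rcases eq_or_lt_of_le ht with h | h
    · rw [← h]
      simp only [Fdef, sub_self, if_pos rfl, if_true, add_zero, div_one]
      have := hy0 t0 le_rfl
      linarith
    · have hr : y t0 ≤ y t0 + Ltot l := le_add_of_nonneg_right hL0
      have hkey := lemKey hδ hlc hln hli ht0 hy0 hyd hy'c hineq φ hφm hφ0 hφδ hr h
      have h1 : y t ≤ y t0 + Ltot l := by
        have ha := lemA hδ hlc hln hli ht0 hy0 hyd hy'c hineq le_rfl ht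
        have hb := Lam_le hlc hln ht0
        linarith
      set A := φ (4 * (y t0 + Ltot l + Ltot l) / (t - t0)) + Lam l ((t - t0) / 2) with hA
      have h3 : y t ≤ min (y t0 + Ltot l) A :=
        le_min h1 (le_trans hkey (min_le_right _ _))
      have hdivnn : 0 ≤ (y t0 + Ltot l) / (1 + (t - t0)) := by
        apply div_nonneg (by linarith [hy0 t0 le_rfl]); linarith
      simp only [Fdef, if_neg (sub_pos.mpr h).ne']
      rw [← hA]
      linarith [le_trans h3 (min_le_left _ _), le_trans h3 (min_le_right _ _), h3]
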